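/- (Potential function growth for dense graphs) With the dense-graph setting above, define Φ(x) = Σ_{u∈V} exp(σ·Σ_{v∈N_u} x_v) with σ = max{4 log n / δ, 1}. If Φ(x) ≤ n·e^{δ/2} then for every u, Σ_{v∈N_u} x_v ≤ (3/4)δ, and after allocating one more ball (uniform birthplace, local search with uniform tie-breaking), E[Φ(X^{(t+1)}) | X^{(t)} = x] ≤ (1 + e^σ·5CΔ/n)·Φ(x). Consequently, after α = n/(e^σ·25C²) balls, E[min{Φ^{(α)}, n e^{δ/2}}] ≤ e^{δ/4}·n, and with probability at least 1 − e^{−δ/4} every vertex has a load-0 neighbor throughout, so the maximum load after α balls is at most 1. -/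

import Mathlib

open Finset

variable {V : Type*} [Fintype V] [DecidableEq V]

/-- The neighbors of `u` of minimal load, provided this minimal load is strictly
smaller than the load of `u`: the candidates of one local-search step. -/
def minNbrs (G : SimpleGraph V) [DecidableRel G.Adj] (x : V → ℕ) (u : V) : Finset V :=
  (G.neighborFinset u).filter
    (fun w => x w < x u ∧ ∀ w' ∈ G.neighborFinset u, x w ≤ x w')

/-- Distribution of the endpoint of a local search started at `u` with loads `x`,
breaking ties uniformly at random, computed with fuel `k` (fuel `x u` suffices since
each step strictly decreases the load). `walkDist G x k u v` is the probability of
ending at `v`. -/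
noncomputable def walkDist (G : SimpleGraph V) [DecidableRel G.Adj] (x : V → ℕ) :
    ℕ → V → V → ℝ
  | 0, u, v => if v = u then 1 else 0
  | k + 1, u, v =>
    if (minNbrs G x u).Nonempty then
      ∑ w ∈ minNbrs G x u, ((minNbrs G x u).card : ℝ)⁻¹ * walkDist G x k w v
    else if v = u then 1 else 0

/-- Probability that a ball with uniformly random birthplace is placed at `v`
when the current loads are `x`. -/
noncomputable def landProb (G : SimpleGraph V) [DecidableRel G.Adj]
    (x : V → ℕ) (v : V) : ℝ :=
  ∑ u : V, ((Fintype.card V : ℝ))⁻¹ * walkDist G x (x u) u v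

/-- Expected value of `f` applied to the load vector obtained from `x` after
allocating `t` further balls (uniform birthplaces, uniform tie-breaking). -/
noncomputable def expectAfter (G : SimpleGraph V) [DecidableRel G.Adj] :
    ℕ → (V → ℕ) → ((V → ℕ) → ℝ) → ℝ
  | 0, x, f => f x
  | t + 1, x, f =>
    ∑ v : V, landProb G x v *
      expectAfter G t (fun z => x z + if z = v then 1 else 0) f

/-- The exponential potential `Φ(x) = Σ_u exp(σ·Σ_{v∈N_u} x_v)`. -/
noncomputable def pot (G : SimpleGraph V) [DecidableRel G.Adj]
    (σ : ℝ) (x : V → ℕ) : ℝ :=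
  ∑ u : V, Real.exp (σ * ∑ w ∈ G.neighborFinset u, (x w : ℝ))


section Helpers

variable (G : SimpleGraph V) [DecidableRel G.Adj]

lemma walkDist_nonneg (x : V → ℕ) : ∀ k u v, 0 ≤ walkDist G x k u v := by
  intro k
  induction k with
  | zero => intro u v; simp only [walkDist]; split <;> norm_num
  | succ k ih =>
    intro u v
    simp only [walkDist]
    split
    · exact Finset.sum_nonneg fun w _ => mul_nonneg (by positivity) (ih w v)
    · split <;> norm_num

lemma sum_walkDist (x : V → ℕ) : ∀ k u, ∑ v, walkDist G x k u v = 1 := by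
  intro k
  induction k with
  | zero => intro u; simp [walkDist]
  | succ k ih =>
    intro u
    simp only [walkDist]
    by_cases h : (minNbrs G x u).Nonempty
    · simp only [if_pos h]
      rw [Finset.sum_comm]
      have heq : ∀ w ∈ minNbrs G x u,
          ∑ v : V, ((minNbrs G x u).card : ℝ)⁻¹ * walkDist G x k w v
            = ((minNbrs G x u).card : ℝ)⁻¹ := by
        intro w _
        rw [← Finset.mul_sum, ih w, mul_one]
      rw [Finset.sum_congr rfl heq, Finset.sum_const, nsmul_eq_mul,
        mul_inv_cancel₀]
      exact_mod_cast Finset.card_ne_zero_of_mem h.choose_spec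
    · simp [if_neg h]

lemma walkDist_of_empty (x : V → ℕ) {u : V} (h : minNbrs G x u = ∅) (k : ℕ) (v : V) :
    walkDist G x k u v = if v = u then 1 else 0 := by
  cases k with
  | zero => rfl
  | succ k => simp [walkDist, h]

lemma walkDist_ne_zero (x : V → ℕ) :
    ∀ k u v, walkDist G x k u v ≠ 0 → minNbrs G x v = ∅ ∨ x v + k ≤ x u := by
  intro k
  induction k with
  | zero =>
    intro u v h
    simp only [walkDist] at h
    right
    rcases eq_or_ne v u with rfl | hne
    · omega
    · simp [hne] at h
  | succ k ih =>
    intro u v h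
    simp only [walkDist] at h
    by_cases hne : (minNbrs G x u).Nonempty
    · rw [if_pos hne] at h
      obtain ⟨w, hw, hwne⟩ := Finset.exists_ne_zero_of_sum_ne_zero h
      have hwalk : walkDist G x k w v ≠ 0 := by
        intro h0; rw [h0, mul_zero] at hwne; exact hwne rfl
      rcases ih w v hwalk with h1 | h1
      · exact Or.inl h1
      · right
        have : x w < x u := (Finset.mem_filter.mp hw).2.1
        omega
    · rw [if_neg hne] at h
      rcases eq_or_ne v u with rfl | hvu
      · exact Or.inl (Finset.not_nonempty_iff_eq_empty.mp hne)
      · simp [hvu] at h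

lemma minNbrs_empty_le (x : V → ℕ) {v w : V} (h : minNbrs G x v = ∅)
    (hw : w ∈ G.neighborFinset v) : x v ≤ x w := by
  by_contra hlt
  push_neg at hlt
  obtain ⟨w0, hw0, hmin⟩ :=
    Finset.exists_min_image (G.neighborFinset v) x ⟨w, hw⟩
  have hmem : w0 ∈ minNbrs G x v :=
    Finset.mem_filter.mpr ⟨hw0, lt_of_le_of_lt (hmin w hw) hlt, hmin⟩
  rw [h] at hmem
  exact absurd hmem (Finset.notMem_empty _)

lemma landProb_nonneg (x : V → ℕ) (v : V) : 0 ≤ landProb G x v :=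
  Finset.sum_nonneg fun u _ => mul_nonneg (by positivity) (walkDist_nonneg G x _ u v)

lemma sum_landProb (hV : 0 < Fintype.card V) (x : V → ℕ) :
    ∑ v, landProb G x v = 1 := by
  unfold landProb
  rw [Finset.sum_comm]
  have heq : ∀ u ∈ (Finset.univ : Finset V),
      ∑ v : V, ((Fintype.card V : ℝ))⁻¹ * walkDist G x (x u) u v
        = ((Fintype.card V : ℝ))⁻¹ := by
    intro u _
    rw [← Finset.mul_sum, sum_walkDist, mul_one]
  rw [Finset.sum_congr rfl heq, Finset.sum_const, nsmul_eq_mul,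
    Finset.card_univ, mul_inv_cancel₀]
  exact_mod_cast hV.ne'

lemma landProb_ne_zero (x : V → ℕ) {v : V} (h : landProb G x v ≠ 0) :
    minNbrs G x v = ∅ := by
  obtain ⟨u, _, hune⟩ := Finset.exists_ne_zero_of_sum_ne_zero h
  have hwalk : walkDist G x (x u) u v ≠ 0 := by
    intro h0; rw [h0, mul_zero] at hune; exact hune rfl
  rcases walkDist_ne_zero G x (x u) u v hwalk with h1 | h1
  · exact h1
  · have hv0 : x v = 0 := by omega
    rw [Finset.eq_empty_iff_forall_notMem]
    intro w hw
    have := (Finset.mem_filter.mp hw).2.1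
    omega

lemma expectAfter_const (hV : 0 < Fintype.card V) (c : ℝ) :
    ∀ t (x : V → ℕ), expectAfter G t x (fun _ => c) = c := by
  intro t
  induction t with
  | zero => intro x; rfl
  | succ t ih =>
    intro x
    simp only [expectAfter, ih]
    rw [← Finset.sum_mul, sum_landProb G hV, one_mul]

lemma expectAfter_mono {f g : (V → ℕ) → ℝ} (h : ∀ y, f y ≤ g y) :
    ∀ t (x : V → ℕ), expectAfter G t x f ≤ expectAfter G t x g := by
  intro t
  induction t with
  | zero => intro x; exact h x
  | succ t ih =>
    intro x
    exact Finset.sum_le_sum fun v _ =>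
      mul_le_mul_of_nonneg_left (ih _) (landProb_nonneg G x v)

lemma expectAfter_one_sub (hV : 0 < Fintype.card V) (f : (V → ℕ) → ℝ) :
    ∀ t (x : V → ℕ), expectAfter G t x (fun y => 1 - f y)
      = 1 - expectAfter G t x f := by
  intro t
  induction t with
  | zero => intro x; rfl
  | succ t ih =>
    intro x
    simp only [expectAfter, ih, mul_sub, Finset.sum_sub_distrib]
    rw [← Finset.sum_mul, sum_landProb G hV, one_mul]

lemma expectAfter_mono_inv {f g : (V → ℕ) → ℝ} (Q : (V → ℕ) → Prop)
    (hQ : ∀ (y : V → ℕ) (v : V), Q y → landProb G y v ≠ 0 →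
      Q (fun z => y z + if z = v then 1 else 0))
    (hfg : ∀ y, Q y → f y ≤ g y) :
    ∀ t (x : V → ℕ), Q x → expectAfter G t x f ≤ expectAfter G t x g := by
  intro t
  induction t with
  | zero => intro x hx; exact hfg x hx
  | succ t ih =>
    intro x hx
    refine Finset.sum_le_sum fun v _ => ?_
    by_cases hp : landProb G x v = 0
    · rw [hp, zero_mul, zero_mul]
    · exact mul_le_mul_of_nonneg_left (ih _ (hQ x v hx hp)) (landProb_nonneg G x v)

lemma expectAfter_const_mul (c : ℝ) (f : (V → ℕ) → ℝ) :
    ∀ t (x : V → ℕ), expectAfter G t x (fun y => c * f y)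
      = c * expectAfter G t x f := by
  intro t
  induction t with
  | zero => intro x; rfl
  | succ t ih =>
    intro x
    simp only [expectAfter, ih, Finset.mul_sum]
    exact Finset.sum_congr rfl fun v _ => by ring

end Helpers

set_option maxHeartbeats 2000000 in
/-- **Potential function growth for dense graphs.**
Let `G` be almost regular on `n` vertices with minimum degree `δ` and maximum degree
`Δ ≤ Cδ`, and set `σ = max{4 log n/δ, 1}`.  Then:
(1) if `Φ(x) ≤ n·e^{δ/2}` then every neighborhood sum satisfies
`Σ_{v∈N_u} x_v ≤ (3/4)δ`;
(2) under the same hypothesis, allocating one further ball increases `Φ` by a factor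
of at most `1 + e^σ·5CΔ/n` in expectation;
(3) consequently, for any number `α ≤ n/(e^σ·25C²)` of balls started from the empty
configuration, `E[min{Φ^{(α)}, n·e^{δ/2}}] ≤ e^{δ/4}·n`; and
(4) with probability at least `1 − e^{−δ/4}` the maximum load after these `α` balls
is at most `1`. -/
theorem dense_potential_growth (G : SimpleGraph V) [DecidableRel G.Adj]
    (n : ℕ) (hn : Fintype.card V = n) (hnpos : 0 < n)
    (δ Δ : ℕ) (hδpos : 0 < δ)
    (hδ : ∀ v, δ ≤ G.degree v) (hΔ : ∀ v, G.degree v ≤ Δ)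
    (C : ℝ) (hC : 1 ≤ C) (hCδ : (Δ : ℝ) ≤ C * δ)
    (σ : ℝ) (hσ : σ = max (4 * Real.log n / δ) 1) :
    (∀ x : V → ℕ, pot G σ x ≤ n * Real.exp (δ / 2) →
      ∀ u : V, (∑ w ∈ G.neighborFinset u, (x w : ℝ)) ≤ 3 / 4 * δ)
    ∧ (∀ x : V → ℕ, pot G σ x ≤ n * Real.exp (δ / 2) →
        (∑ v : V, landProb G x v * pot G σ (fun z => x z + if z = v then 1 else 0))
          ≤ (1 + Real.exp σ * (5 * C * Δ) / n) * pot G σ x)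
    ∧ (∀ α : ℕ, (α : ℝ) ≤ n / (Real.exp σ * 25 * C ^ 2) →
        expectAfter G α (fun _ => 0)
            (fun y => min (pot G σ y) (n * Real.exp (δ / 2)))
          ≤ Real.exp (δ / 4) * n)
    ∧ (∀ α : ℕ, (α : ℝ) ≤ n / (Real.exp σ * 25 * C ^ 2) →
        1 - Real.exp (-(δ : ℝ) / 4) ≤
          expectAfter G α (fun _ => 0)
            (fun y => if ∀ v, y v ≤ 1 then 1 else 0)) := by
  subst hn
  have hne : Nonempty V := Fintype.card_pos_iff.mp hnpos
  have hnR : (0 : ℝ) < (Fintype.card V : ℝ) := by exact_mod_cast hnpos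
  have hδR : (0 : ℝ) < (δ : ℝ) := by exact_mod_cast hδpos
  have hσ1 : (1 : ℝ) ≤ σ := hσ ▸ le_max_right _ _
  have hσpos : (0 : ℝ) < σ := lt_of_lt_of_le one_pos hσ1
  have hσlog : 4 * Real.log (Fintype.card V) / δ ≤ σ := hσ ▸ le_max_left _ _
  have hlog : 0 ≤ Real.log (Fintype.card V) :=
    Real.log_nonneg (by exact_mod_cast hnpos)
  have h4log : 4 * Real.log (Fintype.card V) ≤ σ * δ := by
    have := (div_le_iff₀ hδR).mp hσlog
    linarith
  have hΔR : (0 : ℝ) < (Δ : ℝ) := by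
    have := le_trans (hδ Classical.ofNonempty) (hΔ Classical.ofNonempty)
    have : δ ≤ Δ := this
    exact_mod_cast lt_of_lt_of_le hδpos this
  have hCpos : (0 : ℝ) < C := lt_of_lt_of_le one_pos hC
  set M : ℝ := (Fintype.card V : ℝ) * Real.exp ((δ : ℝ) / 2) with hM
  have hMpos : 0 < M := mul_pos hnR (Real.exp_pos _)
  have hpotpos : ∀ y : V → ℕ, 0 < pot G σ y := fun y =>
    Finset.sum_pos (fun _ _ => Real.exp_pos _) Finset.univ_nonempty
  -- Part (1)
  have key1 : ∀ x : V → ℕ, pot G σ x ≤ M →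
      ∀ u : V, (∑ w ∈ G.neighborFinset u, (x w : ℝ)) ≤ 3 / 4 * δ := by
    intro x hx u
    set S : ℝ := ∑ w ∈ G.neighborFinset u, (x w : ℝ) with hS
    have hterm : Real.exp (σ * S) ≤ pot G σ x :=
      Finset.single_le_sum (f := fun u => Real.exp (σ * ∑ w ∈ G.neighborFinset u, (x w : ℝ)))
        (fun i _ => (Real.exp_pos _).le) (Finset.mem_univ u)
    have hMe : M = Real.exp (Real.log (Fintype.card V) + (δ : ℝ) / 2) := by
      rw [Real.exp_add, Real.exp_log hnR]
    have h2 : σ * S ≤ Real.log (Fintype.card V) + (δ : ℝ) / 2 := by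
      have := le_trans hterm hx
      rw [hMe] at this
      exact Real.exp_le_exp.mp this
    nlinarith [h4log, hσ1, hδR.le, hσpos]
  -- zero-load neighbours
  have hzero : ∀ x : V → ℕ, pot G σ x ≤ M → ∀ a : V, x a ≠ 0 →
      ((δ : ℝ) ≤ 4 * (minNbrs G x a).card ∧ ∀ w ∈ minNbrs G x a, x w = 0) := by
    intro x hx a hxa
    set Z : Finset V := (G.neighborFinset a).filter (fun w => x w = 0) with hZ
    have hcard : (G.neighborFinset a).card
        = Z.card + ((G.neighborFinset a).filter (fun w => ¬ x w = 0)).card := by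
      rw [hZ]
      exact (Finset.card_filter_add_card_filter_not _).symm
    have hNZ : (((G.neighborFinset a).filter (fun w => ¬ x w = 0)).card : ℝ)
        ≤ 3 / 4 * δ := by
      calc (((G.neighborFinset a).filter (fun w => ¬ x w = 0)).card : ℝ)
          = ∑ w ∈ (G.neighborFinset a).filter (fun w => ¬ x w = 0), (1 : ℝ) := by
            simp
        _ ≤ ∑ w ∈ (G.neighborFinset a).filter (fun w => ¬ x w = 0), (x w : ℝ) := by
            refine Finset.sum_le_sum fun w hw => ?_
            have := (Finset.mem_filter.mp hw).2
            exact_mod_cast Nat.one_le_iff_ne_zero.mpr this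
        _ ≤ ∑ w ∈ G.neighborFinset a, (x w : ℝ) :=
            Finset.sum_le_sum_of_subset_of_nonneg (Finset.filter_subset _ _)
              (fun w _ _ => by positivity)
        _ ≤ 3 / 4 * δ := key1 x hx a
    have hdeg : (δ : ℝ) ≤ (G.neighborFinset a).card := by
      rw [SimpleGraph.card_neighborFinset_eq_degree]
      exact_mod_cast hδ a
    have hZcard : (δ : ℝ) ≤ 4 * Z.card := by
      have : ((G.neighborFinset a).card : ℝ)
          = Z.card + ((G.neighborFinset a).filter (fun w => ¬ x w = 0)).card := by
        exact_mod_cast hcard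
      linarith
    have hsub : Z ⊆ minNbrs G x a := by
      intro w hw
      obtain ⟨hw1, hw2⟩ := Finset.mem_filter.mp hw
      refine Finset.mem_filter.mpr ⟨hw1, by omega, fun w' _ => by omega⟩
    have hmin0 : ∀ w ∈ minNbrs G x a, x w = 0 := by
      intro w hw
      have hZne : Z.Nonempty := by
        rw [← Finset.card_pos]
        by_contra hcon
        push_neg at hcon
        interval_cases h : Z.card
        · norm_num at hZcard; linarith
      obtain ⟨w0, hw0⟩ := hZne
      have hw0' := Finset.mem_filter.mp hw0
      have := (Finset.mem_filter.mp hw).2.2 w0 hw0'.1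
      omega
    refine ⟨le_trans hZcard ?_, hmin0⟩
    have hcc : (Z.card : ℝ) ≤ ((minNbrs G x a).card : ℝ) := by
      exact_mod_cast Finset.card_le_card hsub
    linarith
  -- walk bound
  have hwalk : ∀ x : V → ℕ, pot G σ x ≤ M → ∀ a v : V,
      walkDist G x (x a) a v
        ≤ (if v = a then 1 else 0) + (if G.Adj v a then 4 / (δ : ℝ) else 0) := by
    intro x hx a v
    have h2nn : (0 : ℝ) ≤ if G.Adj v a then 4 / (δ : ℝ) else 0 := by
      split <;> positivity
    by_cases hxa : x a = 0
    · rw [hxa]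
      simp only [walkDist]
      split
      · linarith
      · linarith
    · obtain ⟨hZc, hmin0⟩ := hzero x hx a hxa
      have hcpos : (0 : ℝ) < ((minNbrs G x a).card : ℝ) := by linarith
      have hnonempty : (minNbrs G x a).Nonempty := by
        rw [← Finset.card_pos]
        exact_mod_cast hcpos
      obtain ⟨k, hk⟩ := Nat.exists_eq_succ_of_ne_zero hxa
      rw [hk]
      simp only [walkDist, if_pos hnonempty]
      have heach : ∀ w ∈ minNbrs G x a,
          ((minNbrs G x a).card : ℝ)⁻¹ * walkDist G x k w v
            = ((minNbrs G x a).card : ℝ)⁻¹ * (if v = w then 1 else 0) := by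
        intro w hw
        have hempty : minNbrs G x w = ∅ := by
          rw [Finset.eq_empty_iff_forall_notMem]
          intro w' hw'
          have := (Finset.mem_filter.mp hw').2.1
          have := hmin0 w hw
          omega
        rw [walkDist_of_empty G x hempty]
      rw [Finset.sum_congr rfl heach]
      have hsum : ∑ w ∈ minNbrs G x a,
          ((minNbrs G x a).card : ℝ)⁻¹ * (if v = w then 1 else 0)
            = if v ∈ minNbrs G x a then ((minNbrs G x a).card : ℝ)⁻¹ else 0 := by
        simp only [mul_ite, mul_one, mul_zero]
        rw [Finset.sum_ite_eq (minNbrs G x a) v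
          (fun _ => ((minNbrs G x a).card : ℝ)⁻¹)]
      rw [hsum]
      by_cases hv : v ∈ minNbrs G x a
      · rw [if_pos hv]
        have hadj : G.Adj v a := by
          have := (Finset.mem_filter.mp hv).1
          exact (SimpleGraph.mem_neighborFinset G a v).mp this |>.symm
        have hinv : ((minNbrs G x a).card : ℝ)⁻¹ ≤ 4 / (δ : ℝ) := by
          rw [inv_eq_one_div, div_le_div_iff₀ hcpos hδR]
          linarith
        rw [if_pos hadj]
        have : (0:ℝ) ≤ if v = a then 1 else 0 := by split <;> norm_num
        linarith
      · rw [if_neg hv]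
        have : (0:ℝ) ≤ if v = a then 1 else 0 := by split <;> norm_num
        linarith
  -- landProb bound
  have hland : ∀ x : V → ℕ, pot G σ x ≤ M → ∀ v : V,
      landProb G x v ≤ ((Fintype.card V : ℝ))⁻¹ * (1 + 4 * Δ / δ) := by
    intro x hx v
    unfold landProb
    calc ∑ u : V, ((Fintype.card V : ℝ))⁻¹ * walkDist G x (x u) u v
        ≤ ∑ u : V, ((Fintype.card V : ℝ))⁻¹ *
            ((if v = u then 1 else 0) + (if G.Adj v u then 4 / (δ : ℝ) else 0)) := by
          refine Finset.sum_le_sum fun u _ => ?_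
          exact mul_le_mul_of_nonneg_left (hwalk x hx u v) (by positivity)
      _ = ((Fintype.card V : ℝ))⁻¹ *
            ((∑ u : V, if v = u then (1:ℝ) else 0)
              + ∑ u : V, if G.Adj v u then 4 / (δ : ℝ) else 0) := by
          rw [← Finset.mul_sum, Finset.sum_add_distrib]
      _ ≤ ((Fintype.card V : ℝ))⁻¹ * (1 + 4 * Δ / δ) := by
          refine mul_le_mul_of_nonneg_left ?_ (by positivity)
          have h1 : (∑ u : V, if v = u then (1:ℝ) else 0) = 1 := by
            rw [Finset.sum_ite_eq Finset.univ v (fun _ => (1:ℝ)),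
              if_pos (Finset.mem_univ v)]
          have h2 : (∑ u : V, if G.Adj v u then 4 / (δ:ℝ) else 0)
              = (G.degree v : ℝ) * (4 / δ) := by
            rw [← Finset.sum_filter]
            rw [Finset.sum_const, nsmul_eq_mul]
            congr 2
            rw [← SimpleGraph.card_neighborFinset_eq_degree]
            congr 1
            ext w
            simp [SimpleGraph.mem_neighborFinset]
          rw [h1, h2]
          have hdegΔ : ((G.degree v : ℝ)) ≤ (Δ : ℝ) := by exact_mod_cast hΔ v
          have : (G.degree v : ℝ) * (4 / δ) ≤ (Δ:ℝ) * (4/δ) :=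
            mul_le_mul_of_nonneg_right hdegΔ (by positivity)
          have heq : (Δ:ℝ) * (4/δ) = 4 * Δ / δ := by ring
          linarith
  -- neighbourhood landProb bound
  have hnbr : ∀ x : V → ℕ, pot G σ x ≤ M → ∀ u : V,
      ∑ v ∈ G.neighborFinset u, landProb G x v ≤ 5 * C * Δ / (Fintype.card V : ℝ) := by
    intro x hx u
    have hΔδ : (Δ : ℝ) / δ ≤ C := (div_le_iff₀ hδR).mpr hCδ
    calc ∑ v ∈ G.neighborFinset u, landProb G x v
        ≤ ∑ v ∈ G.neighborFinset u, ((Fintype.card V : ℝ))⁻¹ * (1 + 4 * Δ / δ) :=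
          Finset.sum_le_sum fun v _ => hland x hx v
      _ = ((G.degree u : ℝ)) * (((Fintype.card V : ℝ))⁻¹ * (1 + 4 * Δ / δ)) := by
          rw [Finset.sum_const, nsmul_eq_mul, SimpleGraph.card_neighborFinset_eq_degree]
      _ ≤ 5 * C * Δ / (Fintype.card V : ℝ) := by
          have hdegΔ : ((G.degree u : ℝ)) ≤ (Δ : ℝ) := by exact_mod_cast hΔ u
          have hdeg0 : (0:ℝ) ≤ (G.degree u : ℝ) := by positivity
          rw [div_eq_mul_inv]
          have h5 : ((G.degree u : ℝ)) * (1 + 4 * Δ / δ) ≤ 5 * C * Δ := by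
            have e1 : 1 + 4 * (Δ:ℝ) / δ ≤ 5 * C := by
              have : 4 * (Δ:ℝ)/δ = 4 * (Δ/δ) := by ring
              rw [this]
              nlinarith
            nlinarith
          calc ((G.degree u : ℝ)) * (((Fintype.card V : ℝ))⁻¹ * (1 + 4 * Δ / δ))
              = ((G.degree u : ℝ)) * (1 + 4 * Δ / δ) * ((Fintype.card V : ℝ))⁻¹ := by
                ring
            _ ≤ 5 * C * Δ * ((Fintype.card V : ℝ))⁻¹ :=
                mul_le_mul_of_nonneg_right h5 (by positivity)
  -- Part (2)
  have key2 : ∀ x : V → ℕ, pot G σ x ≤ M →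
      (∑ v : V, landProb G x v * pot G σ (fun z => x z + if z = v then 1 else 0))
        ≤ (1 + Real.exp σ * (5 * C * Δ) / (Fintype.card V : ℝ)) * pot G σ x := by
    intro x hx
    have hpot : ∀ v : V, pot G σ (fun z => x z + if z = v then 1 else 0)
        = ∑ u : V, Real.exp (σ * ∑ w ∈ G.neighborFinset u, (x w : ℝ))
            * (if v ∈ G.neighborFinset u then Real.exp σ else 1) := by
      intro v
      unfold pot
      refine Finset.sum_congr rfl fun u _ => ?_
      have hsum : (∑ w ∈ G.neighborFinset u,
          (((x w + if w = v then 1 else 0) : ℕ) : ℝ))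
          = (∑ w ∈ G.neighborFinset u, (x w : ℝ))
            + (if v ∈ G.neighborFinset u then 1 else 0) := by
        push_cast
        rw [Finset.sum_add_distrib]
        congr 1
        rw [Finset.sum_ite_eq' (G.neighborFinset u) v (fun _ => (1:ℝ))]
      rw [hsum, mul_add, Real.exp_add]
      congr 1
      rw [mul_ite, mul_one, mul_zero]
      split
      · rfl
      · exact Real.exp_zero
    have hstep : ∀ u : V,
        (∑ v : V, landProb G x v
          * (if v ∈ G.neighborFinset u then Real.exp σ else 1))
          ≤ 1 + Real.exp σ * (5 * C * Δ) / (Fintype.card V : ℝ) := by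
      intro u
      have hsplit : ∀ v : V, landProb G x v
          * (if v ∈ G.neighborFinset u then Real.exp σ else 1)
          = landProb G x v
            + (if v ∈ G.neighborFinset u
                then landProb G x v * (Real.exp σ - 1) else 0) := by
        intro v
        split <;> ring
      rw [Finset.sum_congr rfl fun v _ => hsplit v, Finset.sum_add_distrib,
        sum_landProb G hnpos]
      have hrest : (∑ v : V, if v ∈ G.neighborFinset u
            then landProb G x v * (Real.exp σ - 1) else 0)
          ≤ Real.exp σ * (5 * C * Δ) / (Fintype.card V : ℝ) := by
        rw [← Finset.sum_filter]
        have hfil : Finset.univ.filter (fun v => v ∈ G.neighborFinset u)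
            = G.neighborFinset u := by
          ext w; simp
        rw [hfil, ← Finset.sum_mul]
        have hexp1 : (0:ℝ) ≤ Real.exp σ - 1 := by
          have := Real.one_le_exp (show (0:ℝ) ≤ σ by linarith)
          linarith
        calc (∑ v ∈ G.neighborFinset u, landProb G x v) * (Real.exp σ - 1)
            ≤ (5 * C * Δ / (Fintype.card V : ℝ)) * (Real.exp σ - 1) :=
              mul_le_mul_of_nonneg_right (hnbr x hx u) hexp1
          _ ≤ (5 * C * Δ / (Fintype.card V : ℝ)) * Real.exp σ := by
              refine mul_le_mul_of_nonneg_left (by linarith) (by positivity)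
          _ = Real.exp σ * (5 * C * Δ) / (Fintype.card V : ℝ) := by ring
      linarith
    calc ∑ v : V, landProb G x v * pot G σ (fun z => x z + if z = v then 1 else 0)
        = ∑ u : V, Real.exp (σ * ∑ w ∈ G.neighborFinset u, (x w : ℝ))
            * (∑ v : V, landProb G x v
                * (if v ∈ G.neighborFinset u then Real.exp σ else 1)) := by
          rw [Finset.sum_congr rfl fun v _ => by rw [hpot v]]
          simp only [Finset.mul_sum]
          rw [Finset.sum_comm]
          refine Finset.sum_congr rfl fun u _ => ?_
          exact Finset.sum_congr rfl fun v _ => by ring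
      _ ≤ ∑ u : V, Real.exp (σ * ∑ w ∈ G.neighborFinset u, (x w : ℝ))
            * (1 + Real.exp σ * (5 * C * Δ) / (Fintype.card V : ℝ)) :=
          Finset.sum_le_sum fun u _ =>
            mul_le_mul_of_nonneg_left (hstep u) (Real.exp_pos _).le
      _ = (1 + Real.exp σ * (5 * C * Δ) / (Fintype.card V : ℝ)) * pot G σ x := by
          rw [← Finset.sum_mul]
          unfold pot
          ring
  -- Part (3): inductive bound
  set β : ℝ := Real.exp σ * (5 * C * Δ) / (Fintype.card V : ℝ) with hβ
  have hβ0 : 0 ≤ β := by positivity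
  have key3gen : ∀ t (x : V → ℕ),
      expectAfter G t x (fun y => min (pot G σ y) M)
        ≤ (1 + β) ^ t * min (pot G σ x) M := by
    intro t
    induction t with
    | zero => intro x; rw [pow_zero, one_mul]; rfl
    | succ t ih =>
      intro x
      by_cases hx : pot G σ x ≤ M
      · have hrec : expectAfter G (t+1) x (fun y => min (pot G σ y) M)
            = ∑ v : V, landProb G x v *
                expectAfter G t (fun z => x z + if z = v then 1 else 0)
                  (fun y => min (pot G σ y) M) := by
          simp only [expectAfter]
        rw [hrec]
        calc (∑ v : V, landProb G x v *
                expectAfter G t (fun z => x z + if z = v then 1 else 0)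
                  (fun y => min (pot G σ y) M))
            ≤ ∑ v : V, landProb G x v *
                ((1 + β) ^ t * pot G σ (fun z => x z + if z = v then 1 else 0)) := by
              refine Finset.sum_le_sum fun v _ => ?_
              refine mul_le_mul_of_nonneg_left ?_ (landProb_nonneg G x v)
              refine le_trans (ih _) ?_
              exact mul_le_mul_of_nonneg_left (min_le_left _ _) (by positivity)
          _ = (1 + β) ^ t * ∑ v : V, landProb G x v *
                pot G σ (fun z => x z + if z = v then 1 else 0) := by
              rw [Finset.mul_sum]
              exact Finset.sum_congr rfl fun v _ => by ring
          _ ≤ (1 + β) ^ t * ((1 + β) * pot G σ x) :=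
              mul_le_mul_of_nonneg_left (key2 x hx) (by positivity)
          _ = (1 + β) ^ (t + 1) * min (pot G σ x) M := by
              rw [min_eq_left hx]; ring
      · push_neg at hx
        have hminM : min (pot G σ x) M = M := min_eq_right hx.le
        rw [hminM]
        have hle : expectAfter G (t+1) x (fun y => min (pot G σ y) M) ≤ M := by
          have := expectAfter_mono G (f := fun y => min (pot G σ y) M)
            (g := fun _ => M) (fun y => min_le_right _ _) (t+1) x
          rwa [expectAfter_const G hnpos M (t+1) x] at this
        have hpow : (1:ℝ) ≤ (1 + β) ^ (t+1) := by
          have := pow_le_pow_left₀ (by norm_num : (0:ℝ) ≤ 1) (by linarith : (1:ℝ) ≤ 1 + β) (t+1)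
          rwa [one_pow] at this
        have hmul := mul_le_mul_of_nonneg_right hpow hMpos.le
        rw [one_mul] at hmul
        linarith
  have hpot0 : pot G σ (fun _ => 0) = (Fintype.card V : ℝ) := by
    unfold pot
    simp
  have hminn : min (pot G σ (fun _ : V => 0)) M = (Fintype.card V : ℝ) := by
    rw [hpot0]
    refine min_eq_left ?_
    rw [hM]
    have h1 : (1:ℝ) ≤ Real.exp ((δ:ℝ)/2) := Real.one_le_exp (by positivity)
    nlinarith [hnR]
  have key3 : ∀ α : ℕ, (α : ℝ) ≤ (Fintype.card V : ℝ) / (Real.exp σ * 25 * C ^ 2) →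
      expectAfter G α (fun _ => 0) (fun y => min (pot G σ y) M)
        ≤ Real.exp ((δ:ℝ) / 4) * (Fintype.card V : ℝ) := by
    intro α hα
    have hβα : β * α ≤ (δ : ℝ) / 4 := by
      have h1 : β * α ≤ β * ((Fintype.card V : ℝ) / (Real.exp σ * 25 * C ^ 2)) :=
        mul_le_mul_of_nonneg_left hα hβ0
      have h2 : β * ((Fintype.card V : ℝ) / (Real.exp σ * 25 * C ^ 2))
          = (Δ : ℝ) / (5 * C) := by
        rw [hβ]
        have he : Real.exp σ ≠ 0 := (Real.exp_pos σ).ne'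
        have hn0 : (Fintype.card V : ℝ) ≠ 0 := hnR.ne'
        have hC0 : C ≠ 0 := hCpos.ne'
        field_simp
        ring
      have h3 : (Δ : ℝ) / (5 * C) ≤ (δ : ℝ) / 4 := by
        rw [div_le_div_iff₀ (by nlinarith : (0:ℝ) < 5 * C) (by norm_num : (0:ℝ) < 4)]
        nlinarith [hCδ, hδR.le, hCpos.le]
      linarith
    calc expectAfter G α (fun _ => 0) (fun y => min (pot G σ y) M)
        ≤ (1 + β) ^ α * min (pot G σ (fun _ : V => 0)) M := key3gen α _
      _ = (1 + β) ^ α * (Fintype.card V : ℝ) := by rw [hminn]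
      _ ≤ Real.exp ((δ:ℝ) / 4) * (Fintype.card V : ℝ) := by
          refine mul_le_mul_of_nonneg_right ?_ hnR.le
          calc (1 + β) ^ α ≤ (Real.exp β) ^ α := by
                refine pow_le_pow_left₀ (by linarith) ?_ α
                have := Real.add_one_le_exp β
                linarith
            _ = Real.exp (β * α) := by
                rw [← Real.exp_nat_mul]
                ring_nf
            _ ≤ Real.exp ((δ:ℝ) / 4) := Real.exp_le_exp.mpr hβα
  -- Part (4)
  have key4 : ∀ α : ℕ, (α : ℝ) ≤ (Fintype.card V : ℝ) / (Real.exp σ * 25 * C ^ 2) →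
      1 - Real.exp (-(δ : ℝ) / 4) ≤
        expectAfter G α (fun _ => 0) (fun y => if ∀ v, y v ≤ 1 then 1 else 0) := by
    intro α hα
    set Q : (V → ℕ) → Prop := fun y => ∀ a : V, 2 ≤ y a →
      ∀ w ∈ G.neighborFinset a, 1 ≤ y w with hQdef
    have hQ0 : Q (fun _ => 0) := by intro a ha; simp at ha
    have hQinv : ∀ (y : V → ℕ) (v : V), Q y → landProb G y v ≠ 0 →
        Q (fun z => y z + if z = v then 1 else 0) := by
      intro y v hQy hp a ha2 w hw
      simp only at ha2 ⊢
      by_cases hav : a = v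
      · subst hav
        simp at ha2
        have hyv : 1 ≤ y a := by omega
        have hempty := landProb_ne_zero G y hp
        have := minNbrs_empty_le G y hempty hw
        omega
      · rw [if_neg hav] at ha2
        have := hQy a (by omega) w hw
        omega
    have hfg : ∀ y : V → ℕ, Q y →
        (1 - if ∀ v, y v ≤ 1 then 1 else 0 : ℝ) ≤ M⁻¹ * min (pot G σ y) M := by
      intro y hQy
      by_cases hgood : ∀ v, y v ≤ 1
      · rw [if_pos hgood]
        have : (0:ℝ) ≤ min (pot G σ y) M := le_min (hpotpos y).le hMpos.le
        have : (0:ℝ) ≤ M⁻¹ * min (pot G σ y) M := by positivity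
        linarith
      · rw [if_neg hgood]
        push_neg at hgood
        obtain ⟨a, ha⟩ := hgood
        have ha2 : 2 ≤ y a := by omega
        have hnbrs : ∀ w ∈ G.neighborFinset a, 1 ≤ y w := hQy a ha2
        have hSa : (δ : ℝ) ≤ ∑ w ∈ G.neighborFinset a, (y w : ℝ) := by
          calc (δ : ℝ) ≤ ((G.neighborFinset a).card : ℝ) := by
                rw [SimpleGraph.card_neighborFinset_eq_degree]
                exact_mod_cast hδ a
            _ = ∑ w ∈ G.neighborFinset a, (1:ℝ) := by simp
            _ ≤ ∑ w ∈ G.neighborFinset a, (y w : ℝ) := by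
                refine Finset.sum_le_sum fun w hw => ?_
                exact_mod_cast hnbrs w hw
        have hpotM : M ≤ pot G σ y := by
          have h1 : M ≤ Real.exp (σ * δ) := by
            have hlogle : Real.log (Fintype.card V) + (δ:ℝ)/2 ≤ σ * δ := by
              nlinarith [h4log, hσ1, hδR.le, hlog]
            calc M = Real.exp (Real.log (Fintype.card V) + (δ:ℝ)/2) := by
                  rw [Real.exp_add, Real.exp_log hnR]
              _ ≤ Real.exp (σ * δ) := Real.exp_le_exp.mpr hlogle
          have h2 : Real.exp (σ * δ)
              ≤ Real.exp (σ * ∑ w ∈ G.neighborFinset a, (y w : ℝ)) :=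
            Real.exp_le_exp.mpr (mul_le_mul_of_nonneg_left hSa hσpos.le)
          have h3 : Real.exp (σ * ∑ w ∈ G.neighborFinset a, (y w : ℝ))
              ≤ pot G σ y :=
            Finset.single_le_sum
              (f := fun u => Real.exp (σ * ∑ w ∈ G.neighborFinset u, (y w : ℝ)))
              (fun i _ => (Real.exp_pos _).le) (Finset.mem_univ a)
          linarith
        rw [min_eq_right hpotM, inv_mul_cancel₀ hMpos.ne']
        norm_num
    have hEbound : expectAfter G α (fun _ => 0)
        (fun y => (1 : ℝ) - if ∀ v, y v ≤ 1 then 1 else 0)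
          ≤ Real.exp (-(δ:ℝ)/4) := by
      calc expectAfter G α (fun _ => 0)
            (fun y => (1 : ℝ) - if ∀ v, y v ≤ 1 then 1 else 0)
          ≤ expectAfter G α (fun _ => 0) (fun y => M⁻¹ * min (pot G σ y) M) :=
            expectAfter_mono_inv G Q hQinv hfg α _ hQ0
        _ = M⁻¹ * expectAfter G α (fun _ => 0) (fun y => min (pot G σ y) M) :=
            expectAfter_const_mul G M⁻¹ _ α _
        _ ≤ M⁻¹ * (Real.exp ((δ:ℝ)/4) * (Fintype.card V : ℝ)) :=
            mul_le_mul_of_nonneg_left (key3 α hα) (by positivity)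
        _ = Real.exp (-(δ:ℝ)/4) := by
            rw [hM, show -(δ:ℝ)/4 = (δ:ℝ)/4 - (δ:ℝ)/2 by ring, Real.exp_sub]
            field_simp
    rw [expectAfter_one_sub G hnpos _ α _] at hEbound
    linarith
  exact ⟨key1, key2, key3, key4⟩
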